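/- (Bauer–Fike bound on pseudospectral radius) Let A be a diagonalizable square complex matrix, A = V Λ V^{-1} with Λ diagonal. Then for every ε > 0, every point z in the ε-pseudospectrum of A lies within distance κ(V)·ε of the spectrum of A, where κ(V) = ‖V‖·‖V^{-1}‖; in particular ρ_ε(A) ≤ ρ(A) + κ(V)ε. -/

import Mathlib

open Matrix

/-- The ℓ²-operator norm of a complex matrix. -/
noncomputable def l2OpNorm {d : ℕ} (A : Matrix (Fin d) (Fin d) ℂ) : ℝ :=
  ‖LinearMap.toContinuousLinearMap (Matrix.toEuclideanLin A)‖

/-- The ε-pseudospectrum of a square complex matrix: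
`σ_ε(A) = σ(A) ∪ { z : ‖(A − zI)⁻¹‖ ≥ 1/ε }`. -/
noncomputable def pseudospectrum {d : ℕ} (ε : ℝ) (A : Matrix (Fin d) (Fin d) ℂ) : Set ℂ :=
  spectrum ℂ A ∪ { z : ℂ | 1 / ε ≤ l2OpNorm (A - z • 1)⁻¹ }

/-- The ε-pseudospectral radius `ρ_ε(A) = sup{ |z| : z ∈ σ_ε(A) }`. -/
noncomputable def pseudospectralRadius {d : ℕ} (ε : ℝ) (A : Matrix (Fin d) (Fin d) ℂ) : ℝ :=
  sSup ((fun z : ℂ => ‖z‖) '' pseudospectrum ε A)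

/-- The spectral radius `ρ(A) = sup{ |z| : z ∈ σ(A) }`. -/
noncomputable def matSpectralRadius {d : ℕ} (A : Matrix (Fin d) (Fin d) ℂ) : ℝ :=
  sSup ((fun z : ℂ => ‖z‖) '' spectrum ℂ A)

lemma l2OpNorm_nonneg {d : ℕ} (A : Matrix (Fin d) (Fin d) ℂ) : 0 ≤ l2OpNorm A :=
  norm_nonneg _

open scoped Matrix.Norms.L2Operator in
lemma l2OpNorm_mul_le {d : ℕ} (A B : Matrix (Fin d) (Fin d) ℂ) :
    l2OpNorm (A * B) ≤ l2OpNorm A * l2OpNorm B := Matrix.l2_opNorm_mul A B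

lemma l2OpNorm_diagonal_le {d : ℕ} (v : Fin d → ℂ) (C : ℝ) (hC : 0 ≤ C)
    (h : ∀ i, ‖v i‖ ≤ C) : l2OpNorm (Matrix.diagonal v) ≤ C := by
  rw [l2OpNorm]
  refine ContinuousLinearMap.opNorm_le_bound _ hC fun x => ?_
  have hy : ∀ i, (LinearMap.toContinuousLinearMap (Matrix.toEuclideanLin (Matrix.diagonal v)) x) i
      = v i * x i := by
    intro i
    show (Matrix.diagonal v *ᵥ (WithLp.equiv 2 _ x)) i = _
    rw [Matrix.mulVec_diagonal]
    rfl
  rw [EuclideanSpace.norm_eq, EuclideanSpace.norm_eq]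
  rw [← Real.sqrt_sq hC, ← Real.sqrt_mul (sq_nonneg C), Finset.mul_sum]
  apply Real.sqrt_le_sqrt
  apply Finset.sum_le_sum
  intro i _
  rw [hy i]
  calc ‖v i * x i‖ ^ 2 = ‖v i‖^2 * ‖x i‖^2 := by rw [norm_mul, mul_pow]
    _ ≤ C^2 * ‖x i‖^2 := by
        apply mul_le_mul_of_nonneg_right _ (sq_nonneg _)
        exact pow_le_pow_left₀ (norm_nonneg _) (h i) 2

lemma conj_diagonal_inv {d : ℕ} (V : Matrix (Fin d) (Fin d) ℂ) (hV : IsUnit V)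
    (v : Fin d → ℂ) (hv : ∀ i, v i ≠ 0) :
    (V * Matrix.diagonal v * V⁻¹)⁻¹ = V * Matrix.diagonal (fun i => (v i)⁻¹) * V⁻¹ := by
  have hdet : IsUnit V.det := (Matrix.isUnit_iff_isUnit_det V).mp hV
  apply Matrix.inv_eq_right_inv
  have h1 : Matrix.diagonal v * Matrix.diagonal (fun i => (v i)⁻¹) = 1 := by
    rw [Matrix.diagonal_mul_diagonal]
    convert Matrix.diagonal_one
    exact mul_inv_cancel₀ (hv _)
  calc (V * Matrix.diagonal v * V⁻¹) * (V * Matrix.diagonal (fun i => (v i)⁻¹) * V⁻¹)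
      = V * (Matrix.diagonal v * ((V⁻¹ * V) * Matrix.diagonal (fun i => (v i)⁻¹))) * V⁻¹ := by
        noncomm_ring
    _ = 1 := by rw [Matrix.nonsing_inv_mul V hdet, one_mul, h1, mul_one,
        Matrix.mul_nonsing_inv V hdet]

lemma conj_spectrum {d : ℕ} (A V Λ : Matrix (Fin d) (Fin d) ℂ) (hV : IsUnit V) (hΛ : Λ.IsDiag)
    (hdiag : A = V * Λ * V⁻¹) : spectrum ℂ A = Set.range Λ.diag := by
  have h1 : (↑hV.unit⁻¹ : Matrix (Fin d) (Fin d) ℂ) = V⁻¹ := by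
    rw [Matrix.coe_units_inv, hV.unit_spec]
  have h2 : A = (hV.unit : Matrix (Fin d) (Fin d) ℂ) * Λ *
      (↑hV.unit⁻¹ : Matrix (Fin d) (Fin d) ℂ) := by
    rw [h1, hV.unit_spec]; exact hdiag
  rw [h2, spectrum.units_conjugate]
  conv_lhs => rw [← hΛ.diagonal_diag]
  rw [spectrum_diagonal]

/-- Bauer–Fike bound on the pseudospectral radius: if `A = V Λ V⁻¹` is diagonalizable,
then every point of the ε-pseudospectrum of `A` lies within distance `κ(V)·ε` of the
spectrum of `A`, where `κ(V) = ‖V‖‖V⁻¹‖`; in particular `ρ_ε(A) ≤ ρ(A) + κ(V)ε`. -/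
theorem bauer_fike_pseudospectrum
    {d : ℕ} (A V Λ : Matrix (Fin d) (Fin d) ℂ) (hV : IsUnit V) (hΛ : Λ.IsDiag)
    (hdiag : A = V * Λ * V⁻¹) (ε : ℝ) (hε : 0 < ε) :
    (∀ z ∈ pseudospectrum ε A, ∃ w ∈ spectrum ℂ A,
        ‖z - w‖ ≤ (l2OpNorm V * l2OpNorm V⁻¹) * ε) ∧
    pseudospectralRadius ε A ≤ matSpectralRadius A + (l2OpNorm V * l2OpNorm V⁻¹) * ε := by
  have hdet : IsUnit V.det := (Matrix.isUnit_iff_isUnit_det V).mp hV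
  have hκ : 0 ≤ l2OpNorm V * l2OpNorm V⁻¹ :=
    mul_nonneg (l2OpNorm_nonneg V) (l2OpNorm_nonneg V⁻¹)
  have hκε : 0 ≤ (l2OpNorm V * l2OpNorm V⁻¹) * ε := mul_nonneg hκ hε.le
  have hspec : spectrum ℂ A = Set.range Λ.diag := conj_spectrum A V Λ hV hΛ hdiag
  have hmain : ∀ z ∈ pseudospectrum ε A, ∃ w ∈ spectrum ℂ A,
      ‖z - w‖ ≤ (l2OpNorm V * l2OpNorm V⁻¹) * ε := by
    intro z hz
    by_cases hzs : z ∈ spectrum ℂ A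
    · exact ⟨z, hzs, by simpa using hκε⟩
    · have hle : 1 / ε ≤ l2OpNorm (A - z • 1)⁻¹ := hz.resolve_left hzs
      have hεinv : (0 : ℝ) < 1 / ε := one_div_pos.mpr hε
      -- the dimension is positive
      have hne : Nonempty (Fin d) := by
        rcases Nat.eq_zero_or_pos d with h | h
        · exfalso
          subst h
          have h0 : (A - z • 1)⁻¹ = 0 := by ext i; exact i.elim0
          rw [h0] at hle
          have h1 : l2OpNorm (0 : Matrix (Fin 0) (Fin 0) ℂ) = 0 := by
            rw [l2OpNorm, map_zero, map_zero, norm_zero]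
          rw [h1] at hle
          linarith
        · exact ⟨⟨0, h⟩⟩
      set v : Fin d → ℂ := fun i => Λ i i - z with hvdef
      have hvne : ∀ i, v i ≠ 0 := by
        intro i h
        apply hzs
        rw [hspec]
        exact ⟨i, sub_eq_zero.mp h⟩
      have hz1 : (z • 1 : Matrix (Fin d) (Fin d) ℂ) = Matrix.diagonal (fun _ => z) :=
        Matrix.smul_one_eq_diagonal z
      have hΛz : Λ - z • 1 = Matrix.diagonal v := by
        conv_lhs => rw [← hΛ.diagonal_diag]
        rw [hz1, Matrix.diagonal_sub]
        rfl
      have hVz : V * (z • 1) * V⁻¹ = (z • 1 : Matrix (Fin d) (Fin d) ℂ) := by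
        rw [mul_smul_comm, mul_one, Matrix.smul_mul, Matrix.mul_nonsing_inv V hdet]
      have hAz : A - z • 1 = V * Matrix.diagonal v * V⁻¹ := by
        rw [← hΛz, hdiag]
        conv_lhs => rw [← hVz]
        rw [Matrix.mul_sub, Matrix.sub_mul]
      have hinv : (A - z • 1)⁻¹ = V * Matrix.diagonal (fun i => (v i)⁻¹) * V⁻¹ := by
        rw [hAz]
        exact conj_diagonal_inv V hV v hvne
      obtain ⟨i₀, -, hi₀⟩ := Finset.exists_max_image Finset.univ (fun i => ‖(v i)⁻¹‖)
        ⟨hne.some, Finset.mem_univ _⟩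
      have hbound : l2OpNorm (A - z • 1)⁻¹ ≤ l2OpNorm V * ‖(v i₀)⁻¹‖ * l2OpNorm V⁻¹ := by
        rw [hinv]
        calc l2OpNorm (V * Matrix.diagonal (fun i => (v i)⁻¹) * V⁻¹)
            ≤ l2OpNorm (V * Matrix.diagonal (fun i => (v i)⁻¹)) * l2OpNorm V⁻¹ :=
              l2OpNorm_mul_le _ _
          _ ≤ (l2OpNorm V * l2OpNorm (Matrix.diagonal (fun i => (v i)⁻¹))) * l2OpNorm V⁻¹ :=
              mul_le_mul_of_nonneg_right (l2OpNorm_mul_le _ _) (l2OpNorm_nonneg _)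
          _ ≤ (l2OpNorm V * ‖(v i₀)⁻¹‖) * l2OpNorm V⁻¹ := by
              apply mul_le_mul_of_nonneg_right _ (l2OpNorm_nonneg _)
              exact mul_le_mul_of_nonneg_left
                (l2OpNorm_diagonal_le _ _ (norm_nonneg _)
                  (fun i => hi₀ i (Finset.mem_univ i))) (l2OpNorm_nonneg _)
      have ha : (0 : ℝ) < ‖v i₀‖ := norm_pos_iff.mpr (hvne i₀)
      have hkey : 1 / ε ≤ (l2OpNorm V * l2OpNorm V⁻¹) / ‖v i₀‖ := by
        calc 1 / ε ≤ l2OpNorm (A - z • 1)⁻¹ := hle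
          _ ≤ l2OpNorm V * ‖(v i₀)⁻¹‖ * l2OpNorm V⁻¹ := hbound
          _ = (l2OpNorm V * l2OpNorm V⁻¹) / ‖v i₀‖ := by
              rw [norm_inv]; field_simp
      rw [div_le_div_iff₀ hε ha, one_mul] at hkey
      refine ⟨Λ i₀ i₀, ?_, ?_⟩
      · rw [hspec]; exact ⟨i₀, rfl⟩
      · have : ‖z - Λ i₀ i₀‖ = ‖v i₀‖ := by
          rw [hvdef]
          simp only [← norm_neg (Λ i₀ i₀ - z), neg_sub]
        rw [this]
        exact hkey
  refine ⟨hmain, ?_⟩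
  have h0 : 0 ≤ matSpectralRadius A := by
    apply Real.sSup_nonneg
    rintro x ⟨w, -, rfl⟩
    exact norm_nonneg w
  apply Real.sSup_le _ (by linarith)
  rintro x ⟨z, hz, rfl⟩
  obtain ⟨w, hw, hzw⟩ := hmain z hz
  have hwle : ‖w‖ ≤ matSpectralRadius A := by
    apply le_csSup ((A.finite_spectrum.image _).bddAbove)
    exact ⟨w, hw, rfl⟩
  calc ‖z‖ = ‖w + (z - w)‖ := by congr 1; ring
    _ ≤ ‖w‖ + ‖z - w‖ := norm_add_le _ _
    _ ≤ matSpectralRadius A + (l2OpNorm V * l2OpNorm V⁻¹) * ε := add_le_add hwle hzw
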